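/- Suppose the abstention costs c_1,…,c_T ∈ [0,1/2] satisfy Tsybakov's condition: there are β > 0 and α ∈ [0,1) such that (1/T)·∑_{t=1}^T 1[1/2 − c_t < x] ≤ β·x^{α/(1−α)} for every x > 0. Assume log N ≤ T, and set η = (log N / T)^{(1−α)/(2−α)}. Then the exponentially weighted forecaster with abstention satisfies R_T ≤ (1 + β/8)·(log N)^{1/(2−α)}·T^{(1−α)/(2−α)}. -/

import Mathlib

noncomputable section

/-- Binary loss of expert `i` in round `t`: `1[y_{t,i} ≠ y_t]`. -/
def expertLoss {N : ℕ} (adv : ℕ → Fin N → ℝ) (y : ℕ → ℝ) (t : ℕ) (i : Fin N) : ℝ :=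
  if adv t i = y t then 0 else 1

/-- Normalized exponential weight `q_{t,i}` of expert `i` in round `t`. -/
def ewQ {N : ℕ} (η : ℝ) (adv : ℕ → Fin N → ℝ) (y : ℕ → ℝ) (t : ℕ) (i : Fin N) : ℝ :=
  Real.exp (-η * ∑ k ∈ Finset.range t, expertLoss adv y k i) /
    ∑ j, Real.exp (-η * ∑ k ∈ Finset.range t, expertLoss adv y k j)

/-- Aggregated prediction `p_t = ∑ i, q_{t,i} y_{t,i}`. -/
def aggP {N : ℕ} (η : ℝ) (adv : ℕ → Fin N → ℝ) (y : ℕ → ℝ) (t : ℕ) : ℝ :=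
  ∑ i, ewQ η adv y t i * adv t i

/-- Expected per-round loss of the exponentially weighted forecaster with abstention:
with `p* = max(p_t, 1 - p_t)`, `k* = 1[p_t ≥ 1/2]` and `α_t = 2(1 - p*)`, the expected
loss is `α_t · c_t + (1 - α_t) · 1[k* ≠ y_t]`. -/
def expAlgLoss {N : ℕ} (η : ℝ) (c : ℕ → ℝ) (adv : ℕ → Fin N → ℝ) (y : ℕ → ℝ) (t : ℕ) : ℝ :=
  let p := aggP η adv y t
  let pstar := max p (1 - p)
  let kstar : ℝ := if (1 : ℝ) / 2 ≤ p then 1 else 0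
  let α := 2 * (1 - pstar)
  α * c t + (1 - α) * (if kstar = y t then 0 else 1)

end

section AuxProofs

open Real Set

private lemma hoeff_bernoulli (m η : ℝ) (hm0 : 0 ≤ m) (hm1 : m ≤ 1) (hη : 0 ≤ η) :
    η * m + Real.log (1 - m * (1 - Real.exp (-η))) ≤ η ^ 2 / 8 := by
  set D : ℝ → ℝ := fun t => 1 - m + m * Real.exp (-t) with hDdef
  have hDpos : ∀ t : ℝ, 0 ≤ t → 0 < D t := by
    intro t ht
    have h1 : Real.exp (-t) ≤ 1 := by
      rw [Real.exp_le_one_iff]; linarith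
    have h2 : 0 < Real.exp (-t) := Real.exp_pos _
    simp only [hDdef]
    nlinarith
  have hDderiv : ∀ t : ℝ, HasDerivAt D (-(m * Real.exp (-t))) t := by
    intro t
    have h1 : HasDerivAt (fun t : ℝ => Real.exp (-t)) (-Real.exp (-t)) t := by
      simpa [Function.comp_def] using ((Real.hasDerivAt_exp (-t)).comp t ((hasDerivAt_id t).neg))
    simpa [mul_comm, hDdef] using ((h1.const_mul m).const_add (1 - m))
  -- g t = m - m * exp(-t) / D t,  g t ≤ t/4 on [0, η]
  set g : ℝ → ℝ := fun t => m - m * Real.exp (-t) / D t with hgdef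
  have hgderiv : ∀ t : ℝ, 0 ≤ t →
      HasDerivAt g (m * Real.exp (-t) * (1 - m) / (D t) ^ 2) t := by
    intro t ht
    have hnum : HasDerivAt (fun t : ℝ => m * Real.exp (-t)) (-(m * Real.exp (-t))) t := by
      have h1 : HasDerivAt (fun t : ℝ => Real.exp (-t)) (-Real.exp (-t)) t := by
        simpa [Function.comp_def] using ((Real.hasDerivAt_exp (-t)).comp t ((hasDerivAt_id t).neg))
      simpa [mul_comm] using h1.const_mul m
    have hdiv := hnum.div (hDderiv t) (ne_of_gt (hDpos t ht))
    have := (hdiv.const_sub m)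
    refine this.congr_deriv ?_
    have hD : D t = 1 - m + m * Real.exp (-t) := rfl
    rw [hD]
    ring
  have hg0 : g 0 = 0 := by
    simp only [hgdef, hDdef]
    norm_num
  have hgbound : ∀ x ∈ Icc (0:ℝ) η, g x ≤ x / 4 := by
    intro x hx
    have key := norm_image_sub_le_of_norm_deriv_le_segment'
      (f := g) (f' := fun t => m * Real.exp (-t) * (1 - m) / (D t) ^ 2)
      (a := 0) (b := η) (C := 1/4)
      (fun t ht => ((hgderiv t ht.1).hasDerivWithinAt))
      (fun t ht => by
        have htt : 0 ≤ t := ht.1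
        have hD := hDpos t htt
        have he : 0 < Real.exp (-t) := Real.exp_pos _
        have hDt : D t = 1 - m + m * Real.exp (-t) := rfl
        rw [Real.norm_eq_abs, abs_div, abs_of_nonneg (by positivity : (0:ℝ) ≤ (D t)^2),
          div_le_iff₀ (by positivity)]
        have habs : |m * Real.exp (-t) * (1 - m)| = m * Real.exp (-t) * (1 - m) := by
          apply abs_of_nonneg
          apply mul_nonneg (mul_nonneg hm0 he.le) (by linarith)
        rw [habs, hDt]
        nlinarith [sq_nonneg (1 - m - m * Real.exp (-t))])
      x hx
    have := (abs_le.1 (by simpa [hg0] using key)).2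
    linarith
  -- h t = m*t + log (D t) - t^2/8 is antitone on [0, η]
  set h : ℝ → ℝ := fun t => m * t + Real.log (D t) - t ^ 2 / 8 with hhdef
  have hhderiv : ∀ t : ℝ, 0 ≤ t →
      HasDerivAt h (g t - t / 4) t := by
    intro t ht
    have hlog := (hDderiv t).log (ne_of_gt (hDpos t ht))
    have h1 : HasDerivAt (fun t : ℝ => m * t) m t := by
      simpa using (hasDerivAt_id t).const_mul m
    have h2 : HasDerivAt (fun t : ℝ => t ^ 2 / 8) (t / 4) t := by
      have := (hasDerivAt_pow 2 t).div_const 8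
      exact this.congr_deriv (by norm_num; ring)
    have := (h1.add hlog).sub h2
    refine this.congr_deriv ?_
    simp only [hgdef]
    ring
  have hanti : AntitoneOn h (Icc (0:ℝ) η) := by
    apply antitoneOn_of_deriv_nonpos (convex_Icc 0 η)
    · apply ContinuousOn.sub
      apply ContinuousOn.add
      · exact (continuous_const.mul continuous_id).continuousOn
      · apply ContinuousOn.log
        · exact (continuous_const.add (continuous_const.mul
            (Real.continuous_exp.comp continuous_neg))).continuousOn
        · intro t ht; exact ne_of_gt (hDpos t ht.1)
      · exact ((continuous_pow 2).div_const 8).continuousOn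
    · intro t ht
      rw [interior_Icc] at ht
      exact ((hhderiv t ht.1.le).differentiableAt).differentiableWithinAt
    · intro t ht
      rw [interior_Icc] at ht
      rw [(hhderiv t ht.1.le).deriv]
      have := hgbound t ⟨ht.1.le, ht.2.le⟩
      linarith
  have h0 : h 0 = 0 := by
    simp only [hhdef, hDdef]
    norm_num
  have hfin := hanti (left_mem_Icc.2 hη) (right_mem_Icc.2 hη) hη
  rw [h0] at hfin
  have : 1 - m * (1 - Real.exp (-η)) = D η := by simp only [hDdef]; ring
  rw [this]
  simp only [hhdef] at hfin
  nlinarith [hfin]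

private lemma perRound (η m c : ℝ) (hη0 : 0 < η) (hη1 : η ≤ 1)
    (hm0 : 0 ≤ m) (hm1 : m ≤ 1) (hc0 : 0 ≤ c) (hc : c ≤ 1/2) (loss : ℝ)
    (hloss : (m ≤ 1/2 ∧ loss = 2*m*c) ∨ (1/2 ≤ m ∧ loss = 2*(1-m)*c + 2*m - 1)) :
    loss ≤ -(1/η) * Real.log (1 - m*(1 - Real.exp (-η)))
      + η/8 * (if 1/2 - c < η then 1 else 0) := by
  have hz0 : 0 < Real.exp (-η) := Real.exp_pos _
  have hz1 : Real.exp (-η) < 1 := by rw [Real.exp_lt_one_iff]; linarith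
  set z := Real.exp (-η) with hzdef
  have hden : 0 < 1 - m * (1 - z) := by nlinarith
  by_cases hbad : 1/2 - c < η
  · -- bad round: loss ≤ m and Hoeffding
    rw [if_pos hbad]
    have hlm : loss ≤ m := by
      rcases hloss with ⟨h1, rfl⟩ | ⟨h1, rfl⟩ <;> nlinarith
    have hh := hoeff_bernoulli m η hm0 hm1 hη0.le
    rw [← hzdef] at hh
    set L := Real.log (1 - m * (1 - z)) with hLdef
    have h2 := mul_le_mul_of_nonneg_left hh (le_of_lt (one_div_pos.2 hη0))
    have hc1 : (1/η) * (η * m + L) = m + (1/η) * L := by field_simp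
    have hc2 : (1/η) * (η^2/8) = η/8 := by field_simp
    rw [hc1, hc2] at h2
    linarith
  · rw [if_neg hbad]
    push_neg at hbad   -- η ≤ 1/2 - c
    have hz2 : z * (1 + η) ≤ 1 := by
      have h1 := Real.add_one_le_exp η
      have h2 : z * Real.exp η = 1 := by rw [hzdef, ← Real.exp_add]; simp
      nlinarith
    have hz3 : 1 - η ≤ z := by
      have := Real.add_one_le_exp (-η); linarith
    rcases hloss with ⟨h1, rfl⟩ | ⟨h1, rfl⟩
    · -- majority correct: 2mc ≤ -(1/η) log(1 - m(1-z))
      have hlog : Real.log (1 - m*(1-z)) ≤ -(m*(1-z)) := by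
        have := Real.log_le_sub_one_of_pos hden; linarith
      have hu : η * (1 - 2*η) ≤ 1 - z := by nlinarith
      have hstep : 2*m*c*η ≤ m*(1-z) := by
        nlinarith [mul_le_mul_of_nonneg_left hu hm0,
          mul_nonneg (mul_nonneg hm0 hη0.le) (show (0:ℝ) ≤ 1 - 2*η - 2*c by linarith)]
      have h3 := mul_le_mul_of_nonneg_left hlog (le_of_lt (one_div_pos.2 hη0))
      have h4 : (1/η) * (-(m*(1-z))) = -(m*(1-z))/η := by ring
      rw [h4] at h3
      rw [mul_comm (2*m*c) η] at hstep
      have h5 : 2*m*c ≤ m*(1-z)/η := (le_div_iff₀ hη0).2 (by linarith [hstep])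
      have h6 : -(1/η) * Real.log (1 - m*(1-z)) ≥ m*(1-z)/η := by
        have : (1/η) * Real.log (1 - m*(1-z)) ≤ -(m*(1-z))/η := h3
        have h7 : -(m*(1-z))/η = -(m*(1-z)/η) := by ring
        rw [h7] at this
        linarith
      simp only [mul_zero, add_zero]
      linarith
    · -- majority wrong
      have hexpη : Real.exp η ≤ 1 + η + 2*η^2 := by
        have hE0 : 0 < Real.exp (η/2) := Real.exp_pos _
        have h1 : Real.exp (η/2) * (1 - η/2) ≤ 1 := by
          have ha := Real.add_one_le_exp (-(η/2))
          have hb : Real.exp (-(η/2)) * Real.exp (η/2) = 1 := by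
            rw [← Real.exp_add]; simp
          nlinarith
        have hsq : Real.exp (η/2) * Real.exp (η/2) = Real.exp η := by
          rw [← Real.exp_add]; ring_nf
        have hsq1 : (Real.exp (η/2) * (1 - η/2)) * (Real.exp (η/2) * (1 - η/2)) ≤ 1 := by
          nlinarith [mul_nonneg hE0.le (show (0:ℝ) ≤ 1 - η/2 by linarith)]
        nlinarith [hsq1, hsq, mul_nonneg (mul_nonneg hη0.le hη0.le) (show (0:ℝ) ≤ 1 - η by linarith),
          sq_nonneg η]
      -- need: loss ≤ -(1/η) log(1 - m(1-z))
      have hkey : 1 - m*(1-z) ≤ Real.exp (-η * (2*(1-m)*c + 2*m - 1)) := by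
        have hid : -η * (2*(1-m)*c + 2*m - 1) = -η + η*(1-m)*(2-2*c) := by ring
        rw [hid, Real.exp_add, ← hzdef]
        have hs : 0 ≤ 1 - m := by linarith
        have hmono : Real.exp (η*(1-m)*(1+2*η)) ≤ Real.exp (η*(1-m)*(2-2*c)) := by
          apply Real.exp_le_exp.2
          nlinarith [mul_nonneg (mul_nonneg hη0.le hs) (show (0:ℝ) ≤ (2-2*c)-(1+2*η) by linarith)]
        have hlin : 1 + η*(1-m)*(1+2*η) ≤ Real.exp (η*(1-m)*(1+2*η)) := by
          linarith [Real.add_one_le_exp (η*(1-m)*(1+2*η))]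
        have hzu : 1 - z ≤ z * η * (1+2*η) := by
          have h2 : z * Real.exp η = 1 := by rw [hzdef, ← Real.exp_add]; simp
          nlinarith [mul_le_mul_of_nonneg_left hexpη hz0.le]
        calc 1 - m*(1-z) = z + (1-m)*(1-z) := by ring
          _ ≤ z + (1-m)*(z*η*(1+2*η)) := by
              have := mul_le_mul_of_nonneg_left hzu hs; linarith
          _ = z * (1 + η*(1-m)*(1+2*η)) := by ring
          _ ≤ z * Real.exp (η*(1-m)*(1+2*η)) := by
              have := mul_le_mul_of_nonneg_left hlin hz0.le; linarith
          _ ≤ z * Real.exp (η*(1-m)*(2-2*c)) := by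
              have := mul_le_mul_of_nonneg_left hmono hz0.le; linarith
      have hlog2 : Real.log (1 - m*(1-z)) ≤ -η * (2*(1-m)*c + 2*m - 1) :=
        (Real.log_le_iff_le_exp hden).2 hkey
      have h3 := mul_le_mul_of_nonneg_left hlog2 (le_of_lt (one_div_pos.2 hη0))
      have h4 : (1/η) * (-η * (2*(1-m)*c + 2*m - 1)) = -(2*(1-m)*c + 2*m - 1) := by
        field_simp
      rw [h4] at h3
      simp only [mul_zero, add_zero]
      linarith

end AuxProofs

set_option maxHeartbeats 1000000 in
/-- Corollary 6: intermediate rates under Tsybakov's condition on the abstention costs.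
With `η = (log N / T)^{(1-α)/(2-α)}`, the regret is at most
`(1 + β/8)·(log N)^{1/(2-α)}·T^{(1-α)/(2-α)}`. -/
theorem abstention_tsybakov_rate (N T : ℕ) (hN : 2 ≤ N) (hT : 1 ≤ T) (c : ℕ → ℝ)
    (hc : ∀ t, c t ∈ Set.Icc (0 : ℝ) (1 / 2)) (β α : ℝ) (hβ : 0 < β)
    (hα0 : 0 ≤ α) (hα1 : α < 1)
    (hTsy : ∀ x : ℝ, 0 < x →
      (1 / T) * ∑ t ∈ Finset.range T, (if 1 / 2 - c t < x then (1 : ℝ) else 0)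
        ≤ β * x ^ (α / (1 - α)))
    (hlogN : Real.log N ≤ T)
    (adv : ℕ → Fin N → ℝ) (y : ℕ → ℝ)
    (hadv : ∀ t i, adv t i = 0 ∨ adv t i = 1) (hy : ∀ t, y t = 0 ∨ y t = 1) :
    (∑ t ∈ Finset.range T,
        expAlgLoss ((Real.log N / T) ^ ((1 - α) / (2 - α))) c adv y t)
        - ⨅ i : Fin N, ∑ t ∈ Finset.range T, expertLoss adv y t i
      ≤ (1 + β / 8) * Real.log N ^ ((1 : ℝ) / (2 - α)) * (T : ℝ) ^ ((1 - α) / (2 - α)) := by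
  have hN1 : (1:ℝ) < (N:ℝ) := by exact_mod_cast (by omega : 1 < N)
  have hT0 : (0:ℝ) < (T:ℝ) := by exact_mod_cast (by omega : 0 < T)
  have h1α : 0 < 1 - α := by linarith
  have h2α : 0 < 2 - α := by linarith
  have hNE : Nonempty (Fin N) := ⟨⟨0, by omega⟩⟩
  set A := Real.log N with hAdef
  have hA : 0 < A := Real.log_pos hN1
  set e1 : ℝ := (1 - α) / (2 - α) with he1def
  have he1 : 0 ≤ e1 := by positivity
  set η := (A / (T:ℝ)) ^ e1 with hηdef
  have hr0 : 0 < A / (T:ℝ) := div_pos hA hT0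
  have hr1 : A / (T:ℝ) ≤ 1 := (div_le_one hT0).2 hlogN
  have hη0 : 0 < η := Real.rpow_pos_of_pos hr0 _
  have hη1 : η ≤ 1 := Real.rpow_le_one hr0.le hr1 he1
  set ℓ := expertLoss adv y with hldef
  have hℓ01 : ∀ t i, ℓ t i = 0 ∨ ℓ t i = 1 := by
    intro t i
    rw [hldef]
    unfold expertLoss
    split <;> simp
  set w : ℕ → Fin N → ℝ := fun t i => Real.exp (-η * ∑ k ∈ Finset.range t, ℓ k i) with hwdef
  have hw : ∀ s i, 0 < w s i := by intro s i; simp only [hwdef]; exact Real.exp_pos _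
  set F : ℕ → ℝ := fun t => ∑ j, w t j with hFdef
  have hF : ∀ s, 0 < F s := by
    intro s
    simp only [hFdef]
    exact Finset.sum_pos (fun j _ => hw s j) Finset.univ_nonempty
  -- per-round bound
  have hround : ∀ t, expAlgLoss η c adv y t ≤
      -(1/η) * (Real.log (F (t+1)) - Real.log (F t))
        + η/8 * (if 1/2 - c t < η then 1 else 0) := by
    intro t
    set q : Fin N → ℝ := fun i => w t i / F t with hqdef
    have hqnn : ∀ i, 0 ≤ q i := fun i => div_nonneg (hw t i).le (hF t).le
    have hq1 : ∑ i, q i = 1 := by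
      simp only [hqdef]
      rw [← Finset.sum_div]
      exact div_self (ne_of_gt (hF t))
    set p := aggP η adv y t with hpdef
    have hpq : p = ∑ i, q i * adv t i := by
      rw [hpdef]
      unfold aggP
      rfl
    set m : ℝ := ∑ i, q i * ℓ t i with hmdef
    have hm0 : 0 ≤ m := Finset.sum_nonneg fun i _ => by
      rcases hℓ01 t i with h | h <;> rw [h] <;> simp [hqnn i]
    have hm1 : m ≤ 1 := by
      rw [hmdef, ← hq1]
      apply Finset.sum_le_sum
      intro i _
      rcases hℓ01 t i with h | h <;> rw [h] <;> simp [hqnn i]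
    have hp0 : 0 ≤ p := by
      rw [hpq]
      apply Finset.sum_nonneg
      intro i _
      rcases hadv t i with h | h <;> rw [h] <;> simp [hqnn i]
    have hp1 : p ≤ 1 := by
      rw [hpq, ← hq1]
      apply Finset.sum_le_sum
      intro i _
      rcases hadv t i with h | h <;> rw [h] <;> simp [hqnn i]
    -- the loss form
    have hun : expAlgLoss η c adv y t =
        2*(1 - max p (1-p)) * c t + (1 - 2*(1 - max p (1-p))) *
          (if (if (1:ℝ)/2 ≤ p then (1:ℝ) else 0) = y t then 0 else 1) := rfl
    have hploss : (m ≤ 1/2 ∧ expAlgLoss η c adv y t = 2*m*(c t)) ∨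
        (1/2 ≤ m ∧ expAlgLoss η c adv y t = 2*(1-m)*(c t) + 2*m - 1) := by
      rcases hy t with hy0 | hy1
      · have hmp : m = p := by
          rw [hmdef, hpq]
          apply Finset.sum_congr rfl
          intro i _
          congr 1
          rw [hldef]
          unfold expertLoss
          rw [hy0]
          rcases hadv t i with h | h <;> rw [h] <;> norm_num
        rcases le_or_gt ((1:ℝ)/2) p with hple | hplt
        · right
          refine ⟨by linarith [hmp], ?_⟩
          have hif : (if (if (1:ℝ)/2 ≤ p then (1:ℝ) else 0) = y t then (0:ℝ) else 1) = 1 := by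
            rw [if_pos hple, hy0]; norm_num
          rw [hun, max_eq_left (by linarith), hif, hmp]; ring
        · left
          refine ⟨by linarith [hmp], ?_⟩
          have hif : (if (if (1:ℝ)/2 ≤ p then (1:ℝ) else 0) = y t then (0:ℝ) else 1) = 0 := by
            rw [if_neg (not_le.2 hplt), hy0]; norm_num
          rw [hun, max_eq_right (by linarith), hif, hmp]; ring
      · have hmp : m = 1 - p := by
          have hstep : ∀ i : Fin N, q i * ℓ t i = q i - q i * adv t i := by
            intro i
            have : ℓ t i = 1 - adv t i := by
              rw [hldef]
              unfold expertLoss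
              rw [hy1]
              rcases hadv t i with h | h <;> rw [h] <;> norm_num
            rw [this]; ring
          rw [hmdef]
          rw [Finset.sum_congr rfl (fun i _ => hstep i), Finset.sum_sub_distrib, hq1, hpq]
        rcases le_or_gt ((1:ℝ)/2) p with hple | hplt
        · left
          refine ⟨by linarith [hmp], ?_⟩
          have hif : (if (if (1:ℝ)/2 ≤ p then (1:ℝ) else 0) = y t then (0:ℝ) else 1) = 0 := by
            rw [if_pos hple, hy1]; norm_num
          rw [hun, max_eq_left (by linarith), hif, hmp]; ring
        · right
          refine ⟨by linarith [hmp], ?_⟩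
          have hif : (if (if (1:ℝ)/2 ≤ p then (1:ℝ) else 0) = y t then (0:ℝ) else 1) = 1 := by
            rw [if_neg (not_le.2 hplt), hy1]; norm_num
          rw [hun, max_eq_right (by linarith), hif, hmp]; ring
    have hPR := perRound η m (c t) hη0 hη1 hm0 hm1 (hc t).1 (hc t).2
      (expAlgLoss η c adv y t) hploss
    -- identity  F (t+1) = (1 - m (1 - e^{-η})) F t
    have hmF : m * F t = ∑ i, w t i * ℓ t i := by
      rw [hmdef, Finset.sum_mul]
      apply Finset.sum_congr rfl
      intro i _
      simp only [hqdef]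
      have := (hF t).ne'
      field_simp
    have hstep : F (t+1) = (1 - m * (1 - Real.exp (-η))) * F t := by
      have hrhs : (1 - m * (1 - Real.exp (-η))) * F t
          = F t - (1 - Real.exp (-η)) * (m * F t) := by ring
      rw [hrhs, hmF, Finset.mul_sum]
      simp only [hFdef]
      rw [← Finset.sum_sub_distrib]
      apply Finset.sum_congr rfl
      intro i _
      have hwsucc : w (t+1) i = w t i * Real.exp (-η * ℓ t i) := by
        simp only [hwdef, Finset.sum_range_succ, ← Real.exp_add]
        congr 1
        ring
      rw [hwsucc]
      rcases hℓ01 t i with h | h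
      · rw [h]; norm_num
      · rw [h]; norm_num; ring
    have hden : 0 < 1 - m * (1 - Real.exp (-η)) := by
      have h1 : 0 < Real.exp (-η) := Real.exp_pos _
      have h2 : Real.exp (-η) ≤ 1 := by rw [Real.exp_le_one_iff]; linarith
      nlinarith
    have hlogeq : Real.log (1 - m * (1 - Real.exp (-η)))
        = Real.log (F (t+1)) - Real.log (F t) := by
      rw [hstep, Real.log_mul (ne_of_gt hden) (ne_of_gt (hF t))]
      ring
    rw [hlogeq] at hPR
    exact hPR
  -- summation
  set B := ∑ t ∈ Finset.range T, (if 1/2 - c t < η then (1:ℝ) else 0) with hBdef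
  have hsum : ∑ t ∈ Finset.range T, expAlgLoss η c adv y t ≤
      -(1/η) * (Real.log (F T) - Real.log (F 0)) + η/8 * B := by
    calc ∑ t ∈ Finset.range T, expAlgLoss η c adv y t
        ≤ ∑ t ∈ Finset.range T, (-(1/η) * (Real.log (F (t+1)) - Real.log (F t))
            + η/8 * (if 1/2 - c t < η then 1 else 0)) :=
          Finset.sum_le_sum fun t _ => hround t
      _ = -(1/η) * (Real.log (F T) - Real.log (F 0)) + η/8 * B := by
          rw [Finset.sum_add_distrib, ← Finset.mul_sum, ← Finset.mul_sum,
            Finset.sum_range_sub (fun s => Real.log (F s))]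
  have hF0 : F 0 = (N:ℝ) := by
    simp only [hFdef, hwdef, Finset.range_zero, Finset.sum_empty, mul_zero, Real.exp_zero]
    rw [Finset.sum_const, Finset.card_univ, Fintype.card_fin, nsmul_eq_mul, mul_one]
  have hbest : -(1/η) * Real.log (F T) ≤ ⨅ i : Fin N, ∑ t ∈ Finset.range T, ℓ t i := by
    apply le_ciInf
    intro i
    have h1 : w T i ≤ F T := by
      simp only [hFdef]
      exact Finset.single_le_sum (fun j _ => (hw T j).le) (Finset.mem_univ i)
    have h2 : Real.log (w T i) ≤ Real.log (F T) := Real.log_le_log (hw T i) h1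
    have h3 : Real.log (w T i) = -η * ∑ t ∈ Finset.range T, ℓ t i := by
      simp only [hwdef]
      exact Real.log_exp _
    rw [h3] at h2
    have h4 : (1/η) * (-η * ∑ t ∈ Finset.range T, ℓ t i)
        = -(∑ t ∈ Finset.range T, ℓ t i) := by field_simp
    nlinarith [mul_le_mul_of_nonneg_left h2 (le_of_lt (one_div_pos.2 hη0))]
  have hB : B ≤ (T:ℝ) * (β * η ^ (α / (1 - α))) := by
    have h1 := hTsy η hη0
    have h2 := mul_le_mul_of_nonneg_left h1 hT0.le
    have h3 : (T:ℝ) * (1/(T:ℝ) * B) = B := by field_simp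
    rw [hBdef]
    rw [hBdef] at h3
    linarith [h2, h3]
  -- final arithmetic
  have hQ : ∑ t ∈ Finset.range T, expAlgLoss η c adv y t
        - (⨅ i : Fin N, ∑ t ∈ Finset.range T, ℓ t i)
      ≤ (1/η) * A + η/8 * ((T:ℝ) * (β * η ^ (α / (1 - α)))) := by
    have hlogF0 : Real.log (F 0) = A := by rw [hF0, hAdef]
    have hmul := mul_le_mul_of_nonneg_left hB (by positivity : (0:ℝ) ≤ η/8)
    have := hsum
    rw [hlogF0] at this
    linarith [hbest, hmul, this]
  -- rpow algebra
  have hTe : ((T:ℝ))^e1 ≠ 0 := ne_of_gt (Real.rpow_pos_of_pos hT0 _)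
  have hAe : (A:ℝ)^e1 ≠ 0 := ne_of_gt (Real.rpow_pos_of_pos hA _)
  have hsplit : A ^ ((1:ℝ)/(2-α)) * A^e1 = A := by
    rw [← Real.rpow_add hA]
    have hexps : (1:ℝ)/(2-α) + e1 = 1 := by rw [he1def]; field_simp; ring
    rw [hexps, Real.rpow_one]
  have hd : (A/(T:ℝ))^e1 = A^e1/(T:ℝ)^e1 := Real.div_rpow hA.le hT0.le e1
  have hkey1 : (1/η) * A = A ^ ((1:ℝ)/(2-α)) * (T:ℝ) ^ e1 := by
    rw [hηdef, hd]
    field_simp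
    linear_combination (-1 : ℝ) * hsplit
  have hηη : η * η^(α/(1-α)) = η^((1:ℝ)/(1-α)) := by
    nth_rewrite 1 [← Real.rpow_one η]
    rw [← Real.rpow_add hη0]
    congr 1
    field_simp
    ring
  have hηpow : η^((1:ℝ)/(1-α)) = A^((1:ℝ)/(2-α)) / (T:ℝ)^((1:ℝ)/(2-α)) := by
    rw [hηdef, ← Real.rpow_mul hr0.le]
    have hexps : e1 * ((1:ℝ)/(1-α)) = (1:ℝ)/(2-α) := by
      rw [he1def]; field_simp
    rw [hexps, Real.div_rpow hA.le hT0.le]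
  have hTdiv : (T:ℝ) / (T:ℝ)^((1:ℝ)/(2-α)) = (T:ℝ)^e1 := by
    nth_rewrite 1 [← Real.rpow_one (T:ℝ)]
    rw [← Real.rpow_sub hT0]
    congr 1
    rw [he1def]; field_simp; ring
  have hkey2 : η/8 * ((T:ℝ) * (β * η ^ (α / (1 - α))))
      = β/8 * (A ^ ((1:ℝ)/(2-α)) * (T:ℝ) ^ e1) := by
    have h1 : η/8 * ((T:ℝ) * (β * η ^ (α / (1 - α))))
        = β/8 * ((T:ℝ) * (η * η ^ (α / (1 - α)))) := by ring
    rw [h1, hηη, hηpow]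
    rw [show (T:ℝ) * (A ^ ((1:ℝ)/(2-α)) / (T:ℝ)^((1:ℝ)/(2-α)))
        = A ^ ((1:ℝ)/(2-α)) * ((T:ℝ) / (T:ℝ)^((1:ℝ)/(2-α))) from by ring, hTdiv]
  calc (∑ t ∈ Finset.range T, expAlgLoss η c adv y t)
      - ⨅ i : Fin N, ∑ t ∈ Finset.range T, ℓ t i
      ≤ (1/η) * A + η/8 * ((T:ℝ) * (β * η ^ (α / (1 - α)))) := hQ
    _ = (1 + β/8) * A ^ ((1:ℝ)/(2-α)) * (T:ℝ) ^ e1 := by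
        rw [hkey1, hkey2]; ring
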